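/- If E is a quasi-uniformly convex Banach lattice, then the norm of the dual Banach lattice E* is order continuous. -/

import Mathlib

open Filter


section Aux

variable {E : Type*} [NormedAddCommGroup E] [Lattice E] [HasSolidNorm E] [IsOrderedAddMonoid E]
    [NormedSpace ℝ E]

lemma aux_inf_add {a b c : E} (ha : 0 ≤ a) (hb : 0 ≤ b) (hc : 0 ≤ c)
    (hab : a ⊓ b = 0) (hac : a ⊓ c = 0) : a ⊓ (b + c) = 0 := by
  have h0 : (0 : E) ≤ a ⊓ (b + c) := le_inf ha (add_nonneg hb hc)
  have h2 : a ⊓ (b + c) ≤ (a ⊓ b) + c := by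
    rw [inf_add]
    exact inf_le_inf_right _ (le_add_of_nonneg_right hc)
  have h3 : a ⊓ (b + c) ≤ (a ⊓ b) + a :=
    inf_le_left.trans (le_add_of_nonneg_left (le_inf ha hb))
  have h4 : a ⊓ (b + c) - (a ⊓ b) ≤ a ⊓ c :=
    le_inf (sub_le_iff_le_add.mpr (h3.trans_eq (add_comm _ _)))
      (sub_le_iff_le_add.mpr (h2.trans_eq (add_comm _ _)))
  rw [hac, hab, sub_zero] at h4
  exact le_antisymm h4 h0

lemma aux_inf_nsmul {a b : E} (ha : 0 ≤ a) (hb : 0 ≤ b) (hab : a ⊓ b = 0) (n : ℕ) :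
    a ⊓ (n • b) = 0 := by
  induction n with
  | zero => rw [zero_nsmul]; exact inf_of_le_right ha
  | succ n ih =>
    rw [succ_nsmul]
    exact aux_inf_add ha (nsmul_nonneg hb n) hb ih hab

lemma aux_inf_nsmul_nsmul {a b : E} (ha : 0 ≤ a) (hb : 0 ≤ b) (hab : a ⊓ b = 0)
    (n m : ℕ) : (n • a) ⊓ (m • b) = 0 := by
  have h1 : b ⊓ (n • a) = 0 := aux_inf_nsmul hb ha (by rw [inf_comm, hab]) n
  have := aux_inf_nsmul (nsmul_nonneg ha n) hb (by rw [inf_comm, h1]) m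
  exact this

/-- Scalar multiplication by a nonnegative real preserves nonnegativity
(this is not an instance hypothesis here, so we prove it via dyadic rationals
and the closedness of the positive cone). -/
lemma aux_smul_nonneg {c : ℝ} (hc : 0 ≤ c) {x : E} (hx : 0 ≤ x) : 0 ≤ c • x := by
  -- first: `2^k • y ≥ 0 → y ≥ 0`
  have semiclosed : ∀ k : ℕ, ∀ y : E, 0 ≤ (2 ^ k : ℕ) • y → 0 ≤ y := by
    intro k
    induction k with
    | zero => intro y hy; simpa using hy
    | succ k ih =>
      intro y hy
      apply ih
      apply nsmul_two_semiclosed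
      have h2 : (2 : ℕ) • ((2 ^ k : ℕ) • y) = (2 ^ (k + 1) : ℕ) • y := by
        rw [smul_smul]; congr 1; rw [pow_succ]; ring
      rw [h2]; exact hy
  -- dyadic rationals scalar multiples of nonneg are nonneg
  have dyadic : ∀ m k : ℕ, 0 ≤ ((m : ℝ) / 2 ^ k) • x := by
    intro m k
    apply semiclosed k
    have hs : ((2 ^ k : ℕ) : ℝ) * ((m : ℝ) / 2 ^ k) = ((m : ℕ) : ℝ) := by
      push_cast; field_simp
    rw [← Nat.cast_smul_eq_nsmul ℝ ((2 ^ k : ℕ)), smul_smul, hs,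
      Nat.cast_smul_eq_nsmul]
    exact nsmul_nonneg hx m
  -- approximate c by dyadics from above
  have : Tendsto (fun k : ℕ => ((⌈c * 2 ^ k⌉₊ : ℝ) / 2 ^ k) • x) atTop (nhds (c • x)) := by
    have h1 : Tendsto (fun k : ℕ => ((⌈c * 2 ^ k⌉₊ : ℝ) / 2 ^ k)) atTop (nhds c) := by
      have hd : ∀ k : ℕ, |((⌈c * 2 ^ k⌉₊ : ℝ) / 2 ^ k) - c| ≤ (1 / 2) ^ k := by
        intro k
        have h2k : (0 : ℝ) < 2 ^ k := by positivity
        have hle : c * 2 ^ k ≤ (⌈c * 2 ^ k⌉₊ : ℝ) := Nat.le_ceil _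
        have hlt : (⌈c * 2 ^ k⌉₊ : ℝ) ≤ c * 2 ^ k + 1 :=
          (Nat.ceil_lt_add_one (by positivity)).le
        rw [abs_le]
        constructor
        · have : c ≤ (⌈c * 2 ^ k⌉₊ : ℝ) / 2 ^ k := by
            rw [le_div_iff₀ h2k]; exact hle
          nlinarith [pow_pos (by norm_num : (0:ℝ) < 1/2) k]
        · rw [div_sub' (ne_of_gt h2k), div_le_iff₀ h2k, div_pow, one_pow,
            div_mul_eq_mul_div, one_mul]
          rw [le_div_iff₀ h2k] at *
          nlinarith
      have h0 : Tendsto (fun k : ℕ => ((1:ℝ) / 2) ^ k) atTop (nhds 0) :=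
        tendsto_pow_atTop_nhds_zero_of_lt_one (by norm_num) (by norm_num)
      rw [tendsto_iff_dist_tendsto_zero]
      apply squeeze_zero (fun k => dist_nonneg) (fun k => by
        rw [Real.dist_eq]; exact hd k) h0
    exact h1.smul_const x
  exact ge_of_tendsto' this fun k => dyadic _ k

lemma aux_smul_le_smul {c d : ℝ} (hcd : c ≤ d) {x : E} (hx : 0 ≤ x) :
    c • x ≤ d • x := by
  have := aux_smul_nonneg (sub_nonneg.mpr hcd) hx
  rw [sub_smul] at this
  exact sub_nonneg.mp this

lemma aux_smul_inf_zero {u v : E} (hu : 0 ≤ u) (hv : 0 ≤ v) (huv : u ⊓ v = 0)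
    {c d : ℝ} (hc : 0 ≤ c) (hd : 0 ≤ d) : (c • u) ⊓ (d • v) = 0 := by
  obtain ⟨n, hn⟩ := exists_nat_ge (max c d)
  have hcu : c • u ≤ n • u := by
    rw [← Nat.cast_smul_eq_nsmul ℝ]
    exact aux_smul_le_smul (le_trans (le_max_left c d) hn) hu
  have hdv : d • v ≤ n • v := by
    rw [← Nat.cast_smul_eq_nsmul ℝ]
    exact aux_smul_le_smul (le_trans (le_max_right c d) hn) hv
  have h0 : (0 : E) ≤ (c • u) ⊓ (d • v) :=
    le_inf (aux_smul_nonneg hc hu) (aux_smul_nonneg hd hv)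
  have h1 : (c • u) ⊓ (d • v) ≤ (n • u) ⊓ (n • v) := inf_le_inf hcu hdv
  rw [aux_inf_nsmul_nsmul hu hv huv n n] at h1
  exact le_antisymm h1 h0

lemma aux_inf_sum_zero {a : E} (ha : 0 ≤ a) (F : Finset ℕ) (u : ℕ → E)
    (hu : ∀ i, 0 ≤ u i) (h : ∀ i ∈ F, a ⊓ u i = 0) : a ⊓ (∑ i ∈ F, u i) = 0 := by
  induction F using Finset.cons_induction with
  | empty => simpa using inf_of_le_right ha
  | cons i F hiF ih =>
    rw [Finset.sum_cons]
    exact aux_inf_add ha (hu i) (Finset.sum_nonneg fun j _ => hu j)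
      (h i (Finset.mem_cons_self _ _))
      (ih fun j hj => h j (Finset.mem_cons_of_mem hj))

/-- The key pair estimate with scaling. -/
lemma aux_pair {α : ℝ} (hα : 1 / 2 < α)
    (hq : ∀ u v : E, 0 ≤ u → 0 ≤ v → u ⊓ v = 0 →
      ‖u‖ = 1 → ‖v‖ = 1 → ‖(1 / 2 : ℝ) • (u + v)‖ < α)
    {u v : E} (hu : 0 ≤ u) (hv : 0 ≤ v) (huv : u ⊓ v = 0)
    (hnu : ‖u‖ ≤ 1) (hnv : ‖v‖ ≤ 1) : ‖u + v‖ ≤ 2 * α := by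
  have h1 : (1 : ℝ) ≤ 2 * α := by linarith
  by_cases hu0 : u = 0
  · subst hu0; simpa using hnv.trans h1
  by_cases hv0 : v = 0
  · subst hv0; simpa using hnu.trans h1
  have hnu0 : (0 : ℝ) < ‖u‖ := norm_pos_iff.mpr hu0
  have hnv0 : (0 : ℝ) < ‖v‖ := norm_pos_iff.mpr hv0
  set u' := ‖u‖⁻¹ • u with hu'def
  set v' := ‖v‖⁻¹ • v with hv'def
  have hu'n : ‖u'‖ = 1 := by
    rw [hu'def, norm_smul, Real.norm_eq_abs, abs_of_nonneg (by positivity),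
      inv_mul_cancel₀ hnu0.ne']
  have hv'n : ‖v'‖ = 1 := by
    rw [hv'def, norm_smul, Real.norm_eq_abs, abs_of_nonneg (by positivity),
      inv_mul_cancel₀ hnv0.ne']
  have hu' : 0 ≤ u' := aux_smul_nonneg (by positivity) hu
  have hv' : 0 ≤ v' := aux_smul_nonneg (by positivity) hv
  have hdisj : u' ⊓ v' = 0 :=
    aux_smul_inf_zero hu hv huv (by positivity) (by positivity)
  have huu' : u ≤ u' := by
    have := aux_smul_le_smul (x := u) (c := 1) (d := ‖u‖⁻¹)
      ((le_inv_comm₀ hnu0 one_pos).mp (by simpa using hnu)) hu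
    simpa using this
  have hvv' : v ≤ v' := by
    have := aux_smul_le_smul (x := v) (c := 1) (d := ‖v‖⁻¹)
      ((le_inv_comm₀ hnv0 one_pos).mp (by simpa using hnv)) hv
    simpa using this
  have hkey : ‖u' + v'‖ < 2 * α := by
    have := hq u' v' hu' hv' hdisj hu'n hv'n
    rw [norm_smul, Real.norm_eq_abs] at this
    rw [show |(1/2 : ℝ)| = 1/2 by norm_num] at this
    linarith
  have hmono : ‖u + v‖ ≤ ‖u' + v'‖ := by
    apply HasSolidNorm.solid
    rw [abs_of_nonneg (add_nonneg hu hv), abs_of_nonneg (add_nonneg hu' hv')]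
    exact add_le_add huu' hvv'
  exact hmono.trans hkey.le

lemma aux_pair_scaled {α : ℝ} (hα : 1 / 2 < α)
    (hq : ∀ u v : E, 0 ≤ u → 0 ≤ v → u ⊓ v = 0 →
      ‖u‖ = 1 → ‖v‖ = 1 → ‖(1 / 2 : ℝ) • (u + v)‖ < α)
    {u v : E} (hu : 0 ≤ u) (hv : 0 ≤ v) (huv : u ⊓ v = 0)
    {c : ℝ} (hc : 0 < c) (hnu : ‖u‖ ≤ c) (hnv : ‖v‖ ≤ c) :
    ‖u + v‖ ≤ 2 * α * c := by
  have h1 : ‖c⁻¹ • u + c⁻¹ • v‖ ≤ 2 * α := by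
    apply aux_pair hα hq (aux_smul_nonneg (by positivity) hu)
      (aux_smul_nonneg (by positivity) hv)
      (aux_smul_inf_zero hu hv huv (by positivity) (by positivity))
    · rw [norm_smul, Real.norm_eq_abs, abs_of_nonneg (by positivity)]
      rw [inv_mul_le_iff₀ hc, mul_one]; exact hnu
    · rw [norm_smul, Real.norm_eq_abs, abs_of_nonneg (by positivity)]
      rw [inv_mul_le_iff₀ hc, mul_one]; exact hnv
  have h2 : ‖c⁻¹ • (u + v)‖ ≤ 2 * α := by rwa [smul_add]
  rw [norm_smul, Real.norm_eq_abs, abs_of_nonneg (by positivity)] at h2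
  calc ‖u + v‖ = c * (c⁻¹ * ‖u + v‖) := by field_simp
  _ ≤ c * (2 * α) := by
      apply mul_le_mul_of_nonneg_left h2 hc.le
  _ = 2 * α * c := by ring

lemma aux_sum_bound {α : ℝ} (hα : 1 / 2 < α)
    (hq : ∀ u v : E, 0 ≤ u → 0 ≤ v → u ⊓ v = 0 →
      ‖u‖ = 1 → ‖v‖ = 1 → ‖(1 / 2 : ℝ) • (u + v)‖ < α)
    (m : ℕ) : ∀ (F : Finset ℕ) (u : ℕ → E), (∀ i, 0 ≤ u i) → (∀ i, ‖u i‖ ≤ 1) →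
    (∀ i ∈ F, ∀ j ∈ F, i ≠ j → u i ⊓ u j = 0) → F.card ≤ 2 ^ m →
    ‖∑ i ∈ F, u i‖ ≤ (2 * α) ^ m := by
  have h1 : (1 : ℝ) ≤ 2 * α := by linarith
  induction m with
  | zero =>
    intro F u hpos hnorm hdisj hcard
    simp only [pow_zero, pow_one] at hcard ⊢
    interval_cases h : F.card
    · rw [Finset.card_eq_zero.mp h]; simp
    · obtain ⟨a, rfl⟩ := Finset.card_eq_one.mp h
      simpa using hnorm a
  | succ m ih =>
    intro F u hpos hnorm hdisj hcard
    by_cases hsmall : F.card ≤ 2 ^ m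
    · calc ‖∑ i ∈ F, u i‖ ≤ (2 * α) ^ m := ih F u hpos hnorm hdisj hsmall
      _ ≤ (2 * α) ^ (m + 1) := pow_le_pow_right₀ h1 (Nat.le_succ m)
    · obtain ⟨s, hsF, hscard⟩ := Finset.exists_subset_card_eq
        (show 2 ^ m ≤ F.card by omega)
      have hsplit : ∑ i ∈ F \ s, u i + ∑ i ∈ s, u i = ∑ i ∈ F, u i :=
        Finset.sum_sdiff hsF
      have hc2 : (F \ s).card ≤ 2 ^ m := by
        rw [Finset.card_sdiff_of_subset hsF, hscard]
        have := hcard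
        rw [pow_succ] at this
        omega
      have hS1 : ‖∑ i ∈ s, u i‖ ≤ (2 * α) ^ m :=
        ih s u hpos hnorm (fun i hi j hj => hdisj i (hsF hi) j (hsF hj)) hscard.le
      have hS2 : ‖∑ i ∈ F \ s, u i‖ ≤ (2 * α) ^ m :=
        ih (F \ s) u hpos hnorm
          (fun i hi j hj => hdisj i (Finset.sdiff_subset hi) j (Finset.sdiff_subset hj)) hc2
      have hSdisj : (∑ i ∈ F \ s, u i) ⊓ (∑ i ∈ s, u i) = 0 := by
        apply aux_inf_sum_zero (Finset.sum_nonneg fun j _ => hpos j) s u hpos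
        intro i hi
        rw [inf_comm]
        apply aux_inf_sum_zero (hpos i) (F \ s) u hpos
        intro j hj
        apply hdisj i (hsF hi) j (Finset.sdiff_subset hj)
        intro hij
        exact (Finset.mem_sdiff.mp hj).2 (hij ▸ hi)
      have := aux_pair_scaled hα hq (Finset.sum_nonneg fun j _ => hpos j)
        (Finset.sum_nonneg fun j _ => hpos j) hSdisj
        (show (0:ℝ) < (2*α)^m by positivity) hS2 hS1
      rw [hsplit] at this
      calc ‖∑ i ∈ F, u i‖ ≤ 2 * α * (2 * α) ^ m := this
      _ = (2 * α) ^ (m + 1) := by ring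

lemma aux_abs_sum_le (u : ℕ → E) (F : Finset ℕ) :
    |∑ i ∈ F, u i| ≤ ∑ i ∈ F, |u i| := by
  induction F using Finset.cons_induction with
  | empty => simp
  | cons i F hiF ih =>
    rw [Finset.sum_cons, Finset.sum_cons]
    exact (abs_add_le _ _).trans (add_le_add_right ih _)

end Aux

/-- The dual of a Banach lattice has order continuous norm iff every norm-bounded
disjoint sequence in `E` converges weakly to `0` (Meyer-Nieberg, Theorem 2.4.14);
we use this characterization as our formal rendering of the statement
"`E*` has order continuous norm". -/
def DualHasOrderContinuousNorm (E : Type*) [NormedAddCommGroup E] [Lattice E] [HasSolidNorm E]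
    [IsOrderedAddMonoid E]
    [NormedSpace ℝ E] : Prop :=
  ∀ x : ℕ → E, (∀ n, ‖x n‖ ≤ 1) → (∀ n m, n ≠ m → |x n| ⊓ |x m| = 0) →
    ∀ φ : E →L[ℝ] ℝ, Tendsto (fun n => φ (x n)) atTop (nhds 0)

/-- **Statement 7.** If `E` is a quasi-uniformly convex Banach lattice (there is
`0 < α < 1` such that `‖(u+v)/2‖ < α` whenever `u, v ≥ 0` are disjoint of norm one),
then the norm of the dual Banach lattice `E*` is order continuous. -/
theorem dual_orderContinuous_of_quasiUniformlyConvex {E : Type*}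
    [NormedAddCommGroup E] [Lattice E] [HasSolidNorm E] [IsOrderedAddMonoid E]
    [NormedSpace ℝ E] [CompleteSpace E]
    (hquc : ∃ α : ℝ, 0 < α ∧ α < 1 ∧ ∀ u v : E, 0 ≤ u → 0 ≤ v → u ⊓ v = 0 →
      ‖u‖ = 1 → ‖v‖ = 1 → ‖(1 / 2 : ℝ) • (u + v)‖ < α) :
    DualHasOrderContinuousNorm E := by

  obtain ⟨α₀, hα₀pos, hα₀lt, hq₀⟩ := hquc
  set α : ℝ := max α₀ (3 / 4) with hαdef
  have hαhalf : 1 / 2 < α := lt_of_lt_of_le (by norm_num) (le_max_right _ _)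
  have hαlt : α < 1 := max_lt hα₀lt (by norm_num)
  have hq : ∀ u v : E, 0 ≤ u → 0 ≤ v → u ⊓ v = 0 →
      ‖u‖ = 1 → ‖v‖ = 1 → ‖(1 / 2 : ℝ) • (u + v)‖ < α := fun u v h1 h2 h3 h4 h5 =>
    lt_of_lt_of_le (hq₀ u v h1 h2 h3 h4 h5) (le_max_left _ _)
  intro x hx hdisj φ
  rw [NormedAddCommGroup.tendsto_nhds_zero]
  intro ε hε
  rw [← Nat.cofinite_eq_atTop, eventually_cofinite]
  -- the set of bad indices is finite
  by_contra hinf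
  rw [← Set.not_infinite, not_not] at hinf
  set C : ℝ := ‖φ‖ + 1 with hCdef
  have hC : 0 < C := by positivity
  obtain ⟨m, hm⟩ : ∃ m : ℕ, α ^ m < ε / C :=
    exists_pow_lt_of_lt_one (by positivity) hαlt
  obtain ⟨F, hFsub, hFcard⟩ := hinf.exists_subset_card_eq (2 ^ m)
  -- signs
  set y : ℕ → E := fun n => if 0 ≤ φ (x n) then x n else -(x n) with hydef
  have hyabs : ∀ n, |y n| = |x n| := by
    intro n; rw [hydef]; dsimp only; split <;> simp [abs_neg]
  have hyφ : ∀ n, φ (y n) = |φ (x n)| := by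
    intro n; rw [hydef]; dsimp only; split
    · rw [abs_of_nonneg (by assumption)]
    · rw [map_neg, abs_of_neg (lt_of_not_ge (by assumption))]
  have hbad : ∀ n ∈ F, ε ≤ |φ (x n)| := by
    intro n hn
    have := hFsub hn
    simp only [Set.mem_setOf_eq, not_lt, Real.norm_eq_abs] at this
    exact this
  -- lower bound
  have hlow : (2 ^ m : ℝ) * ε ≤ φ (∑ n ∈ F, y n) := by
    rw [map_sum]
    calc (2 ^ m : ℝ) * ε = F.card • ε := by rw [hFcard, nsmul_eq_mul]; push_cast; ring
    _ ≤ ∑ n ∈ F, φ (y n) := Finset.card_nsmul_le_sum F _ ε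
        (fun n hn => (hbad n hn).trans_eq (hyφ n).symm)
  -- upper bound
  have habs_sum : ‖∑ n ∈ F, y n‖ ≤ ‖∑ n ∈ F, |x n|‖ := by
    apply HasSolidNorm.solid
    have h1 : |∑ n ∈ F, y n| ≤ ∑ n ∈ F, |y n| := aux_abs_sum_le y F
    have h2 : (0 : E) ≤ ∑ n ∈ F, |x n| := Finset.sum_nonneg fun n _ => abs_nonneg _
    rw [abs_of_nonneg h2]
    calc |∑ n ∈ F, y n| ≤ ∑ n ∈ F, |y n| := h1
    _ = ∑ n ∈ F, |x n| := Finset.sum_congr rfl fun n _ => hyabs n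
  have hsumbound : ‖∑ n ∈ F, |x n|‖ ≤ (2 * α) ^ m := by
    apply aux_sum_bound hαhalf hq m F (fun n => |x n|)
      (fun n => abs_nonneg _) (fun n => (norm_abs_eq_norm _).le.trans (hx n))
      (fun i _ j _ hij => hdisj i j hij) hFcard.le
  have hup : φ (∑ n ∈ F, y n) ≤ C * (2 * α) ^ m := by
    calc φ (∑ n ∈ F, y n) ≤ |φ (∑ n ∈ F, y n)| := le_abs_self _
    _ ≤ ‖φ‖ * ‖∑ n ∈ F, y n‖ := φ.le_opNorm _
    _ ≤ C * ‖∑ n ∈ F, |x n|‖ := by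
        apply mul_le_mul (by rw [hCdef]; linarith) habs_sum (norm_nonneg _) hC.le
    _ ≤ C * (2 * α) ^ m := by
        exact mul_le_mul_of_nonneg_left hsumbound hC.le
  have : (2 ^ m : ℝ) * ε ≤ C * (2 * α) ^ m := hlow.trans hup
  rw [mul_pow] at this
  have h2m : (0 : ℝ) < 2 ^ m := by positivity
  have : ε ≤ C * α ^ m := by
    rw [show C * (2 ^ m * α ^ m) = 2 ^ m * (C * α ^ m) by ring] at this
    exact le_of_mul_le_mul_left this h2m
  have : ε < ε := this.trans_lt (by
    rw [lt_div_iff₀ hC] at hm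
    linarith [hm])
  exact lt_irrefl ε this
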